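/- The logic LPV⁻ admits internalization: if A₁,…,Aₙ, y₁:B₁,…,yₘ:Bₘ ⊢ F in LPV⁻, then there is a proof term p(x₁,…,xₙ,y₁,…,yₘ) such that x₁:A₁,…,xₙ:Aₙ, y₁:B₁,…,yₘ:Bₘ ⊢ p(x₁,…,xₙ,y₁,…,yₘ):F. -/

import Mathlib

/-- Proof terms of the logic of proofs. -/
inductive Tm : Type
  | var   : ℕ → Tm
  | const : ℕ → Tm
  | app   : Tm → Tm → Tm
  | sum   : Tm → Tm → Tm
  | bang  : Tm → Tm

/-- A ground term contains no proof variables. -/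
def Tm.ground : Tm → Prop
  | .var _ => False
  | .const _ => True
  | .app t s => t.ground ∧ s.ground
  | .sum t s => t.ground ∧ s.ground
  | .bang t => t.ground

/-- Proof variables occurring in a term. -/
def Tm.vars : Tm → List ℕ
  | .var x => [x]
  | .const _ => []
  | .app t s => t.vars ++ s.vars
  | .sum t s => t.vars ++ s.vars
  | .bang t => t.vars

/-- Formulas of the logics LPV⁻ / LPV of explicit proofs and verification. -/
inductive LForm : Type
  | atom : ℕ → LForm
  | bot  : LForm
  | and  : LForm → LForm → LForm
  | or   : LForm → LForm → LForm
  | imp  : LForm → LForm → LForm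
  | V    : LForm → LForm
  | pf   : Tm → LForm → LForm

def LForm.neg (A : LForm) : LForm := A.imp .bot

/-- Proof variables occurring in a formula. -/
def LForm.vars : LForm → List ℕ
  | .atom _ => []
  | .bot => []
  | .and A B => A.vars ++ B.vars
  | .or A B => A.vars ++ B.vars
  | .imp A B => A.vars ++ B.vars
  | .V A => A.vars
  | .pf t A => t.vars ++ A.vars

/-- Axioms of LPV⁻ (`strong = false`) and LPV (`strong = true`, adding ¬t:V⊥). -/
inductive LAxiom (strong : Bool) : LForm → Prop
  | a1 (A B : LForm) : LAxiom strong (A.imp (B.imp A))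
  | a2 (A B C : LForm) : LAxiom strong ((A.imp (B.imp C)).imp ((A.imp B).imp (A.imp C)))
  | andI (A B : LForm) : LAxiom strong (A.imp (B.imp (A.and B)))
  | andE1 (A B : LForm) : LAxiom strong ((A.and B).imp A)
  | andE2 (A B : LForm) : LAxiom strong ((A.and B).imp B)
  | orI1 (A B : LForm) : LAxiom strong (A.imp (A.or B))
  | orI2 (A B : LForm) : LAxiom strong (B.imp (A.or B))
  | orE (A B C : LForm) : LAxiom strong ((A.imp C).imp ((B.imp C).imp ((A.or B).imp C)))
  | exfalso (A : LForm) : LAxiom strong (LForm.bot.imp A)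
  | dne (A : LForm) : LAxiom strong (A.neg.neg.imp A)
  | appAx (t s : Tm) (A B : LForm) :
      LAxiom strong ((LForm.pf t (A.imp B)).imp ((LForm.pf s A).imp (LForm.pf (t.app s) B)))
  | reflAx (t : Tm) (A : LForm) : LAxiom strong ((LForm.pf t A).imp A)
  | checkAx (t : Tm) (A : LForm) :
      LAxiom strong ((LForm.pf t A).imp (LForm.pf t.bang (LForm.pf t A)))
  | sum1 (t s : Tm) (A : LForm) : LAxiom strong ((LForm.pf t A).imp (LForm.pf (s.sum t) A))
  | sum2 (t s : Tm) (A : LForm) : LAxiom strong ((LForm.pf t A).imp (LForm.pf (t.sum s) A))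
  | vK (A B : LForm) : LAxiom strong ((LForm.V (A.imp B)).imp ((LForm.V A).imp (LForm.V B)))
  | pfV (t : Tm) (A : LForm) : LAxiom strong ((LForm.pf t A).imp (LForm.V A))
  | consis (t : Tm) : strong = true → LAxiom strong (LForm.pf t (LForm.V LForm.bot)).neg

/-- Hilbert-style derivability for LPV⁻ / LPV from a list of hypotheses, with
modus ponens and axiom necessitation. -/
inductive LDerivCtx (strong : Bool) (Γ : List LForm) : LForm → Prop
  | hyp {A : LForm} : A ∈ Γ → LDerivCtx strong Γ A
  | ax {A : LForm} : LAxiom strong A → LDerivCtx strong Γ A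
  | mp {A B : LForm} : LDerivCtx strong Γ (A.imp B) → LDerivCtx strong Γ A → LDerivCtx strong Γ B
  | nec {A : LForm} (c : ℕ) : LAxiom strong A → LDerivCtx strong Γ (LForm.pf (Tm.const c) A)

/-- Derivability in LPV⁻ / LPV (no hypotheses). -/
def LDeriv (strong : Bool) (A : LForm) : Prop := LDerivCtx strong [] A

/-- LPV⁻ admits internalization: if A₁,…,Aₙ, y₁:B₁,…,yₘ:Bₘ ⊢ F,
then for fresh distinct proof variables x₁,…,xₙ there is a proof term p (whose
variables are among the xᵢ and yⱼ) with x₁:A₁,…,xₙ:Aₙ, y₁:B₁,…,yₘ:Bₘ ⊢ p:F. -/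
theorem mem_zip_of_mem_right {α β : Type*} {xs : List α} {A : List β}
    (hlen : xs.length = A.length) {a : β} (ha : a ∈ A) :
    ∃ x, (x, a) ∈ xs.zip A := by
  induction A generalizing xs with
  | nil => simp at ha
  | cons b A ih =>
    cases xs with
    | nil => simp at hlen
    | cons x xs =>
      cases ha with
      | head => exact ⟨x, List.mem_cons_self⟩
      | tail _ ha =>
        obtain ⟨x', hx'⟩ := ih (by simpa using hlen) ha
        exact ⟨x', List.mem_cons_of_mem _ hx'⟩

theorem lpv_minus_internalization (A : List LForm) (B : List (ℕ × LForm)) (F : LForm)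
    (h : LDerivCtx false (A ++ B.map (fun yb => LForm.pf (Tm.var yb.1) yb.2)) F)
    (xs : List ℕ) (hlen : xs.length = A.length) (hnodup : xs.Nodup)
    (hfresh : ∀ x ∈ xs,
      (∀ C ∈ A, x ∉ C.vars) ∧ (∀ yb ∈ B, x ≠ yb.1 ∧ x ∉ yb.2.vars) ∧ x ∉ F.vars) :
    ∃ p : Tm, (∀ v ∈ p.vars, v ∈ xs ∨ v ∈ B.map Prod.fst) ∧
      LDerivCtx false
        ((xs.zip A).map (fun xA => LForm.pf (Tm.var xA.1) xA.2) ++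
          B.map (fun yb => LForm.pf (Tm.var yb.1) yb.2))
        (LForm.pf p F) := by
  clear hnodup hfresh
  induction h with
  | @hyp G hG =>
    rcases List.mem_append.1 hG with hGA | hGB
    · obtain ⟨x, hxz⟩ := mem_zip_of_mem_right hlen hGA
      refine ⟨Tm.var x, ?_, ?_⟩
      · intro v hv
        simp [Tm.vars] at hv
        exact Or.inl (hv ▸ (List.of_mem_zip hxz).1)
      · exact LDerivCtx.hyp (List.mem_append.2 (Or.inl
          (List.mem_map.2 ⟨(x, G), hxz, rfl⟩)))
    · obtain ⟨yb, hyb, rfl⟩ := List.mem_map.1 hGB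
      refine ⟨Tm.bang (Tm.var yb.1), ?_, ?_⟩
      · intro v hv
        simp [Tm.vars] at hv
        exact Or.inr (List.mem_map.2 ⟨yb, hyb, hv.symm⟩)
      · exact LDerivCtx.mp (LDerivCtx.ax (LAxiom.checkAx _ _))
          (LDerivCtx.hyp (List.mem_append.2 (Or.inr hGB)))
  | @ax G hax =>
    exact ⟨Tm.const 0, by intro v hv; simp [Tm.vars] at hv, LDerivCtx.nec 0 hax⟩
  | @mp P Q h1 h2 ih1 ih2 =>
    obtain ⟨p1, hv1, hd1⟩ := ih1
    obtain ⟨p2, hv2, hd2⟩ := ih2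
    refine ⟨p1.app p2, ?_, ?_⟩
    · intro v hv
      simp [Tm.vars] at hv
      rcases hv with hv | hv
      · exact hv1 v hv
      · exact hv2 v hv
    · exact LDerivCtx.mp (LDerivCtx.mp (LDerivCtx.ax (LAxiom.appAx _ _ _ _)) hd1) hd2
  | @nec G c hax =>
    refine ⟨Tm.bang (Tm.const c), by intro v hv; simp [Tm.vars] at hv, ?_⟩
    exact LDerivCtx.mp (LDerivCtx.ax (LAxiom.checkAx _ _)) (LDerivCtx.nec c hax)
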